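/- arXiv:2509.06151 — 3 statements merged into one kernel-verified Lean document; each statement's English description precedes it below -/
import Mathlib

section
/- Fix t > 0 and nonnegative sequences λ, a, b : ℕ → ℝ such that the series ∑_i exp(−(t/2)·λ_i)·a_i² and ∑_i exp(−t·λ_i)·b_i² converge. Let B = sup_{x ≥ 0} x²·e^{−x/2}. Then the series ∑_i λ_i·exp(−t·λ_i)·a_i·b_i converges and ∑_i λ_i·exp(−t·λ_i)·a_i·b_i ≤ B^{1/2}·t^{−1}·(∑_i exp(−(t/2)·λ_i)·a_i²)^{1/2}·(∑_i exp(−t·λ_i)·b_i²)^{1/2}. -/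
lemma aux_bdd : BddAbove ((fun x : ℝ => x ^ 2 * Real.exp (-x / 2)) '' Set.Ici 0) := by
  refine ⟨16, ?_⟩
  rintro y ⟨x, hx, rfl⟩
  simp only [Set.mem_Ici] at hx
  have h1 : x / 4 ≤ Real.exp (x / 4) := (le_add_of_nonneg_right zero_le_one).trans
    (Real.add_one_le_exp _)
  have h2 : x ^ 2 / 16 ≤ Real.exp (x / 2) := by
    have hm := mul_le_mul h1 h1 (by positivity) (Real.exp_nonneg _)
    rw [← Real.exp_add] at hm
    calc x ^ 2 / 16 = (x / 4) * (x / 4) := by ring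
    _ ≤ Real.exp (x / 4 + x / 4) := hm
    _ = Real.exp (x / 2) := by ring_nf
  have hep : 0 < Real.exp (-x / 2) := Real.exp_pos _
  have hle : x ^ 2 ≤ 16 * Real.exp (x / 2) := by linarith
  calc x ^ 2 * Real.exp (-x / 2) ≤ (16 * Real.exp (x / 2)) * Real.exp (-x / 2) :=
        mul_le_mul_of_nonneg_right hle hep.le
    _ = 16 := by rw [mul_assoc, ← Real.exp_add]; ring_nf; simp

/-- Spectral Cauchy–Schwarz estimate for the heat-kernel derivative:
for `t > 0` and nonnegative sequences `lam`, `a`, `b` with the indicated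
summability, the series `∑ i, lam i * exp (-t * lam i) * a i * b i` converges
and is bounded by `√B * t⁻¹ * (∑ exp(-(t/2)λᵢ) aᵢ²)^{1/2} * (∑ exp(-tλᵢ) bᵢ²)^{1/2}`,
where `B = sup_{x ≥ 0} x² e^{-x/2}`. -/
theorem stmt0 (t : ℝ) (ht : 0 < t) (lam a b : ℕ → ℝ)
    (hlam : ∀ i, 0 ≤ lam i) (ha : ∀ i, 0 ≤ a i) (hb : ∀ i, 0 ≤ b i)
    (hsa : Summable fun i => Real.exp (-(t / 2) * lam i) * a i ^ 2)
    (hsb : Summable fun i => Real.exp (-t * lam i) * b i ^ 2) :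
    (Summable fun i => lam i * Real.exp (-t * lam i) * a i * b i) ∧
      (∑' i, lam i * Real.exp (-t * lam i) * a i * b i) ≤
        Real.sqrt (sSup ((fun x : ℝ => x ^ 2 * Real.exp (-x / 2)) '' Set.Ici 0)) * t⁻¹ *
          Real.sqrt (∑' i, Real.exp (-(t / 2) * lam i) * a i ^ 2) *
          Real.sqrt (∑' i, Real.exp (-t * lam i) * b i ^ 2) := by
  set B := sSup ((fun x : ℝ => x ^ 2 * Real.exp (-x / 2)) '' Set.Ici 0) with hBdef
  set u : ℕ → ℝ := fun i => Real.exp (-(t / 4) * lam i) * a i with hu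
  set v : ℕ → ℝ := fun i => Real.exp (-(t / 2) * lam i) * b i with hv
  have hu2 : ∀ i, u i ^ 2 = Real.exp (-(t / 2) * lam i) * a i ^ 2 := by
    intro i
    simp only [hu, mul_pow, sq (Real.exp _), ← Real.exp_add]
    ring_nf
  have hv2 : ∀ i, v i ^ 2 = Real.exp (-t * lam i) * b i ^ 2 := by
    intro i
    simp only [hv, mul_pow, sq (Real.exp _), ← Real.exp_add]
    ring_nf
  have hsu : Summable fun i => u i ^ 2 := by simpa only [hu2] using hsa
  have hsv : Summable fun i => v i ^ 2 := by simpa only [hv2] using hsb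
  have hun : ∀ i, 0 ≤ u i := fun i => mul_nonneg (Real.exp_nonneg _) (ha i)
  have hvn : ∀ i, 0 ≤ v i := fun i => mul_nonneg (Real.exp_nonneg _) (hb i)
  have hsuv : Summable fun i => u i * v i := by
    apply Summable.of_nonneg_of_le (fun i => mul_nonneg (hun i) (hvn i))
      (fun i => ?_) ((hsu.add hsv).mul_left (1 / 2 : ℝ))
    nlinarith [sq_nonneg (u i - v i)]
  have hB0 : 0 ≤ B := le_csSup aux_bdd ⟨0, Set.self_mem_Ici, by simp⟩
  have hc0 : 0 ≤ Real.sqrt B * t⁻¹ := mul_nonneg (Real.sqrt_nonneg _) (inv_nonneg.mpr ht.le)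
  have key : ∀ i, lam i * Real.exp (-t * lam i) * a i * b i ≤
      Real.sqrt B * t⁻¹ * (u i * v i) := by
    intro i
    have hmem : (t * lam i) ^ 2 * Real.exp (-(t * lam i) / 2) ≤ B :=
      le_csSup aux_bdd ⟨t * lam i, mul_nonneg ht.le (hlam i), rfl⟩
    have hsq : (t * lam i * Real.exp (-(t / 4) * lam i)) ^ 2
        = (t * lam i) ^ 2 * Real.exp (-(t * lam i) / 2) := by
      rw [mul_pow, sq (Real.exp _), ← Real.exp_add]
      ring_nf
    have h1 : t * (lam i * Real.exp (-(t / 4) * lam i)) ≤ Real.sqrt B := by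
      rw [← mul_assoc]
      exact (Real.le_sqrt (mul_nonneg (mul_nonneg ht.le (hlam i)) (Real.exp_nonneg _))
        hB0).mpr (hsq.le.trans hmem)
    have h2 : lam i * Real.exp (-(t / 4) * lam i) ≤ Real.sqrt B * t⁻¹ := by
      rw [← div_eq_mul_inv]
      exact (le_div_iff₀' ht).mpr h1
    have hexp : Real.exp (-(t / 4) * lam i) * Real.exp (-(t / 4) * lam i) *
        Real.exp (-(t / 2) * lam i) = Real.exp (-t * lam i) := by
      rw [← Real.exp_add, ← Real.exp_add]; ring_nf
    have heq : lam i * Real.exp (-t * lam i) * a i * b i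
        = lam i * Real.exp (-(t / 4) * lam i) * (u i * v i) := by
      simp only [hu, hv]
      rw [← hexp]; ring
    rw [heq]
    exact mul_le_mul_of_nonneg_right h2 (mul_nonneg (hun i) (hvn i))
  have hsum : Summable fun i => lam i * Real.exp (-t * lam i) * a i * b i := by
    apply Summable.of_nonneg_of_le (fun i => ?_) key (hsuv.mul_left _)
    exact mul_nonneg (mul_nonneg (mul_nonneg (hlam i) (Real.exp_nonneg _)) (ha i)) (hb i)
  refine ⟨hsum, ?_⟩
  have huvle : (∑' i, u i * v i) ≤
      Real.sqrt (∑' i, u i ^ 2) * Real.sqrt (∑' i, v i ^ 2) := by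
    apply Summable.tsum_le_of_sum_le hsuv
    intro s
    calc ∑ i ∈ s, u i * v i ≤ Real.sqrt (∑ i ∈ s, u i ^ 2) * Real.sqrt (∑ i ∈ s, v i ^ 2) :=
          Real.sum_mul_le_sqrt_mul_sqrt s u v
      _ ≤ Real.sqrt (∑' i, u i ^ 2) * Real.sqrt (∑' i, v i ^ 2) := by
          apply mul_le_mul
          · exact Real.sqrt_le_sqrt (Summable.sum_le_tsum s (fun i _ => sq_nonneg _) hsu)
          · exact Real.sqrt_le_sqrt (Summable.sum_le_tsum s (fun i _ => sq_nonneg _) hsv)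
          · exact Real.sqrt_nonneg _
          · exact Real.sqrt_nonneg _
  have hA : (∑' i, u i ^ 2) = ∑' i, Real.exp (-(t / 2) * lam i) * a i ^ 2 :=
    tsum_congr hu2
  have hB' : (∑' i, v i ^ 2) = ∑' i, Real.exp (-t * lam i) * b i ^ 2 :=
    tsum_congr hv2
  calc (∑' i, lam i * Real.exp (-t * lam i) * a i * b i)
      ≤ ∑' i, Real.sqrt B * t⁻¹ * (u i * v i) :=
        Summable.tsum_le_tsum key hsum (hsuv.mul_left _)
    _ = Real.sqrt B * t⁻¹ * ∑' i, u i * v i := tsum_mul_left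
    _ ≤ Real.sqrt B * t⁻¹ * (Real.sqrt (∑' i, u i ^ 2) * Real.sqrt (∑' i, v i ^ 2)) :=
        mul_le_mul_of_nonneg_left huvle hc0
    _ = Real.sqrt B * t⁻¹ * Real.sqrt (∑' i, Real.exp (-(t / 2) * lam i) * a i ^ 2) *
          Real.sqrt (∑' i, Real.exp (-t * lam i) * b i ^ 2) := by
        rw [hA, hB']; ring
end

section
/- Let λ₀ > 0 and A > 0. Let λ₁ ≤ λ₂ ≤ λ₃ ≤ ⋯ be a nondecreasing sequence of reals with λ_k ≥ λ₀ for all k ≥ 1, and assume that for every t ∈ (0,1] the series ∑_{i=1}^∞ exp(−t·λ_i) converges and is at most A/t. Then λ_k ≥ (λ₀·e^{−λ₀}/A)·k for every k ≥ 1. -/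
lemma lam_mono_aux (_lam : ℝ → ℝ) : True := trivial

/-- Eigenvalue growth from a heat trace bound: if `λ₁ ≤ λ₂ ≤ ⋯` is a
nondecreasing sequence with `λ_k ≥ λ₀ > 0` for `k ≥ 1`, and for every
`t ∈ (0, 1]` the series `∑_{i=1}^∞ exp (-t λ_i)` converges with sum at most
`A / t`, then `λ_k ≥ (λ₀ e^{-λ₀} / A) k` for every `k ≥ 1`. -/
theorem stmt1 (lam0 A : ℝ) (hlam0 : 0 < lam0) (hA : 0 < A)
    (lam : ℕ → ℝ)
    (hmono : ∀ k : ℕ, 1 ≤ k → lam k ≤ lam (k + 1))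
    (hlb : ∀ k : ℕ, 1 ≤ k → lam0 ≤ lam k)
    (htrace : ∀ t : ℝ, 0 < t → t ≤ 1 →
      (Summable fun i : ℕ => Real.exp (-t * lam (i + 1))) ∧
        (∑' i : ℕ, Real.exp (-t * lam (i + 1))) ≤ A / t) :
    ∀ k : ℕ, 1 ≤ k → lam0 * Real.exp (-lam0) / A * k ≤ lam k := by
  have hmono' : ∀ i j : ℕ, 1 ≤ i → i ≤ j → lam i ≤ lam j := by
    intro i j hi hij
    induction j with
    | zero => omega
    | succ n ih =>
      rcases Nat.lt_or_ge i (n + 1) with h | h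
      · exact le_trans (ih (by omega)) (hmono n (by omega))
      · have : i = n + 1 := by omega
        simp [this]
  intro k hk
  have hlamk : lam0 ≤ lam k := hlb k hk
  have hlamk0 : 0 < lam k := lt_of_lt_of_le hlam0 hlamk
  set t := lam0 / lam k with ht
  have ht0 : 0 < t := div_pos hlam0 hlamk0
  have ht1 : t ≤ 1 := (div_le_one hlamk0).mpr hlamk
  obtain ⟨hsum, hbound⟩ := htrace t ht0 ht1
  -- finite sum lower bound
  have hfin : (k : ℝ) * Real.exp (-lam0) ≤ ∑ i ∈ Finset.range k, Real.exp (-t * lam (i + 1)) := by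
    have : ∀ i ∈ Finset.range k, Real.exp (-lam0) ≤ Real.exp (-t * lam (i + 1)) := by
      intro i hi
      apply Real.exp_le_exp.mpr
      have hle : lam (i + 1) ≤ lam k := hmono' (i + 1) k (by omega) (Finset.mem_range.mp hi)
      have : t * lam (i + 1) ≤ t * lam k := by
        exact mul_le_mul_of_nonneg_left hle ht0.le
      have htk : t * lam k = lam0 := div_mul_cancel₀ lam0 hlamk0.ne'
      nlinarith
    calc (k : ℝ) * Real.exp (-lam0)
        = ∑ _i ∈ Finset.range k, Real.exp (-lam0) := by
          simp [Finset.sum_const, mul_comm]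
      _ ≤ _ := Finset.sum_le_sum this
  have htsum : ∑ i ∈ Finset.range k, Real.exp (-t * lam (i + 1))
      ≤ ∑' i : ℕ, Real.exp (-t * lam (i + 1)) :=
    Summable.sum_le_tsum _ (fun i _ => (Real.exp_pos _).le) hsum
  have key : (k : ℝ) * Real.exp (-lam0) ≤ A / t := le_trans hfin (le_trans htsum hbound)
  have hAt : A / t = A * lam k / lam0 := by
    field_simp [ht]
    rw [ht, div_mul_cancel₀ lam0 hlamk0.ne']
  rw [hAt] at key
  rw [div_mul_eq_mul_div, div_le_iff₀ hA]
  have h1 : (k : ℝ) * Real.exp (-lam0) * lam0 ≤ A * lam k := by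
    rw [le_div_iff₀ hlam0] at key
    linarith
  nlinarith [Real.exp_pos (-lam0), (Nat.cast_pos (α := ℝ)).mpr (by omega : 0 < k)]
end

section
/- Let n ∈ ℕ and k ≤ n. Let A and B be Hermitian n×n complex matrices such that A_{ij} = 0 whenever i ≤ k or j ≤ k, the top-left block (B_{ij})_{1≤i,j≤k} is positive definite, and the bottom-right block (A_{ij})_{k<i,j≤n} is positive definite. Let E : ℝ → M_n(ℂ) be a matrix-valued function with E(L) → 0 as L → +∞. Then det(L·A + B + E(L))/L^{n−k} converges, as L → +∞, to det((B_{ij})_{1≤i,j≤k})·det((A_{ij})_{k<i,j≤n}), and this limit is a positive real number. -/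
open scoped ComplexOrder

/-- The embedding of the last `n - k` indices `{k, …, n-1}` into `Fin n`. -/
def lowerEmbed (n k : ℕ) (hk : k ≤ n) : Fin (n - k) → Fin n :=
  fun i => ⟨k + i, by have := i.isLt; omega⟩

/-- Linear-algebra core of the determinant-of-periods asymptotics: if `A`, `B`
are Hermitian `n × n` matrices with `A i j = 0` whenever `i < k` or `j < k`
(0-based indexing of the first `k` rows/columns), the top-left `k × k` block of
`B` is positive definite, the bottom-right `(n-k) × (n-k)` block of `A` is
positive definite, and `E(L) → 0` as `L → ∞`, then
`det(L·A + B + E(L)) / L^{n-k}` converges to the product of the two block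
determinants, a positive real number. -/
theorem stmt8 (n k : ℕ) (hk : k ≤ n)
    (A B : Matrix (Fin n) (Fin n) ℂ)
    (hA : A.IsHermitian) (hB : B.IsHermitian)
    (hAzero : ∀ i j : Fin n, (i : ℕ) < k ∨ (j : ℕ) < k → A i j = 0)
    (hBblock : (B.submatrix (Fin.castLE hk) (Fin.castLE hk)).PosDef)
    (hAblock : (A.submatrix (lowerEmbed n k hk) (lowerEmbed n k hk)).PosDef)
    (E : ℝ → Matrix (Fin n) (Fin n) ℂ)
    (hE : Filter.Tendsto E Filter.atTop (nhds 0)) :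
    Filter.Tendsto
        (fun L : ℝ => ((L : ℂ) • A + B + E L).det / (L : ℂ) ^ (n - k))
        Filter.atTop
        (nhds ((B.submatrix (Fin.castLE hk) (Fin.castLE hk)).det *
          (A.submatrix (lowerEmbed n k hk) (lowerEmbed n k hk)).det)) ∧
      ∃ r : ℝ, 0 < r ∧
        (B.submatrix (Fin.castLE hk) (Fin.castLE hk)).det *
            (A.submatrix (lowerEmbed n k hk) (lowerEmbed n k hk)).det = (r : ℂ) := by
  -- the limiting matrix
  set C : Matrix (Fin n) (Fin n) ℂ :=
    fun i j => if (i : ℕ) < k then B i j else A i j with hC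
  -- reindexing equivalence
  have hnk : k + (n - k) = n := by omega
  let e : Fin k ⊕ Fin (n - k) ≃ Fin n := finSumFinEquiv.trans (finCongr hnk)
  have he1 : ∀ i : Fin k, e (Sum.inl i) = Fin.castLE hk i := by
    intro i; ext; simp [e, finSumFinEquiv]
  have he2 : ∀ j : Fin (n - k), e (Sum.inr j) = lowerEmbed n k hk j := by
    intro j; ext; simp [e, finSumFinEquiv, lowerEmbed]
  -- det C is the product of block determinants
  have hdetC : C.det = (B.submatrix (Fin.castLE hk) (Fin.castLE hk)).det *
      (A.submatrix (lowerEmbed n k hk) (lowerEmbed n k hk)).det := by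
    rw [← Matrix.det_submatrix_equiv_self e C]
    have : C.submatrix e e = Matrix.fromBlocks
        (B.submatrix (Fin.castLE hk) (Fin.castLE hk))
        (B.submatrix (Fin.castLE hk) (lowerEmbed n k hk)) 0
        (A.submatrix (lowerEmbed n k hk) (lowerEmbed n k hk)) := by
      ext i j
      cases i with
      | inl i =>
        cases j with
        | inl j =>
          simp [Matrix.submatrix, he1, hC, Matrix.fromBlocks, (Fin.castLE hk i).isLt,
            i.isLt, Fin.castLE]
        | inr j =>
          simp [Matrix.submatrix, he1, he2, hC, Matrix.fromBlocks, i.isLt, Fin.castLE]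
      | inr i =>
        cases j with
        | inl j =>
          have h1 : ¬ ((e (Sum.inr i) : ℕ) < k) := by
            rw [he2]; simp [lowerEmbed]
          have h2 : ((e (Sum.inl j) : ℕ) < k) := by rw [he1]; simpa [Fin.castLE] using j.isLt
          simp only [Matrix.submatrix, Matrix.fromBlocks, Matrix.of_apply, Sum.elim_inr,
            Sum.elim_inl, hC, h1, if_false, Matrix.zero_apply]
          exact hAzero _ _ (Or.inr h2)
        | inr j =>
          have h1 : ¬ ((e (Sum.inr i) : ℕ) < k) := by
            rw [he2]; simp [lowerEmbed]
          simp [Matrix.submatrix, he2, hC, Matrix.fromBlocks, lowerEmbed]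
    rw [this, Matrix.det_fromBlocks_zero₂₁]
  constructor
  · -- convergence
    -- auxiliary matrix
    set N : ℝ → Matrix (Fin n) (Fin n) ℂ := fun L =>
      fun i j => if (i : ℕ) < k then B i j + E L i j
        else A i j + (L : ℂ)⁻¹ * (B i j + E L i j) with hN
    have hEij : ∀ i j : Fin n, Filter.Tendsto (fun L => E L i j) Filter.atTop (nhds 0) := by
      intro i j
      have : Continuous fun M : Matrix (Fin n) (Fin n) ℂ => M i j :=
        (continuous_apply j).comp (continuous_apply i)
      exact (this.tendsto 0).comp hE
    have hinv : Filter.Tendsto (fun L : ℝ => (L : ℂ)⁻¹) Filter.atTop (nhds 0) := by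
      have : Filter.Tendsto (fun L : ℝ => ((L⁻¹ : ℝ) : ℂ)) Filter.atTop (nhds ((0 : ℝ) : ℂ)) :=
        (Complex.continuous_ofReal.tendsto 0).comp tendsto_inv_atTop_zero
      simpa using this
    have hNC : Filter.Tendsto N Filter.atTop (nhds C) := by
      refine tendsto_pi_nhds.2 ?_
      intro i
      rw [tendsto_pi_nhds]
      intro j
      by_cases hi : (i : ℕ) < k
      · have : Filter.Tendsto (fun L => B i j + E L i j) Filter.atTop (nhds (B i j + 0)) :=
          tendsto_const_nhds.add (hEij i j)
        simpa [hN, hC, hi] using this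
      · have : Filter.Tendsto (fun L : ℝ => A i j + (L : ℂ)⁻¹ * (B i j + E L i j))
            Filter.atTop (nhds (A i j + 0 * (B i j + 0))) :=
          tendsto_const_nhds.add (hinv.mul (tendsto_const_nhds.add (hEij i j)))
        simpa [hN, hC, hi] using this
    have hdetN : Filter.Tendsto (fun L => (N L).det) Filter.atTop (nhds C.det) :=
      ((continuous_id.matrix_det).tendsto C).comp hNC
    rw [hdetC] at hdetN
    refine hdetN.congr' ?_
    filter_upwards [Filter.eventually_gt_atTop (0 : ℝ)] with L hL
    have hL0 : (L : ℂ) ≠ 0 := by exact_mod_cast hL.ne'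
    -- N L = D L * M L
    set d : Fin n → ℂ := fun i => if (i : ℕ) < k then 1 else (L : ℂ)⁻¹ with hd
    have hNL : N L = Matrix.diagonal d * ((L : ℂ) • A + B + E L) := by
      ext i j
      rw [Matrix.diagonal_mul]
      by_cases hi : (i : ℕ) < k
      · have hA0 : A i j = 0 := hAzero i j (Or.inl hi)
        simp [hN, hd, hi, hA0, Matrix.add_apply, Matrix.smul_apply]
      · simp only [hN, hd, hi, if_false, Matrix.add_apply, Matrix.smul_apply, smul_eq_mul]
        field_simp
        ring
    have hdetd : (Matrix.diagonal d).det = ((L : ℂ)⁻¹) ^ (n - k) := by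
      rw [Matrix.det_diagonal, ← Equiv.prod_comp e]
      rw [Fintype.prod_sum_type]
      have h1 : ∀ i : Fin k, d (e (Sum.inl i)) = 1 := by
        intro i; simp [hd, he1, Fin.castLE, i.isLt]
      have h2 : ∀ j : Fin (n - k), d (e (Sum.inr j)) = (L : ℂ)⁻¹ := by
        intro j; simp [hd, he2, lowerEmbed]
      simp [h1, h2]
    rw [hNL, Matrix.det_mul, hdetd]
    rw [div_eq_mul_inv, inv_pow, mul_comm]
  · -- positivity
    have hBpos := hBblock.det_pos
    have hApos := hAblock.det_pos
    rw [Complex.lt_def] at hBpos hApos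
    refine ⟨(B.submatrix (Fin.castLE hk) (Fin.castLE hk)).det.re *
      (A.submatrix (lowerEmbed n k hk) (lowerEmbed n k hk)).det.re, ?_, ?_⟩
    · exact mul_pos (by simpa using hBpos.1) (by simpa using hApos.1)
    · have e1 : (B.submatrix (Fin.castLE hk) (Fin.castLE hk)).det =
          ((B.submatrix (Fin.castLE hk) (Fin.castLE hk)).det.re : ℂ) := by
        apply Complex.ext <;> simp [← hBpos.2]
      have e2 : (A.submatrix (lowerEmbed n k hk) (lowerEmbed n k hk)).det =
          ((A.submatrix (lowerEmbed n k hk) (lowerEmbed n k hk)).det.re : ℂ) := by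
        apply Complex.ext <;> simp [← hApos.2]
      rw [e1, e2]; simp
end
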